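/- (Trivariate mixture uniqueness used in Theorem 1(ii).) Let F_1,…,F_r and G_1,…,G_r be cumulative distribution functions of Borel probability measures on ℝ, with each family linearly independent, and let p_1,…,p_r > 0 and q_1,…,q_r > 0 satisfy Σ_z p_z = Σ_z q_z = 1. If Σ_{z=1}^r p_z F_z(x_1) F_z(x_2) F_z(x_3) = Σ_{z=1}^r q_z G_z(x_1) G_z(x_2) G_z(x_3) for all x_1, x_2, x_3 ∈ ℝ, then there exists a permutation σ of {1,…,r} such that q_{σ(z)} = p_z and G_{σ(z)} = F_z (pointwise) for every z. -/

import Mathlib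

open Filter Finset


/-- `F` is the cumulative distribution function of a Borel probability measure on `ℝ`:
nondecreasing, right-continuous, with limit `0` at `-∞` and limit `1` at `+∞`. -/
def IsCDF (F : ℝ → ℝ) : Prop :=
  Monotone F ∧ (∀ x, ContinuousWithinAt F (Set.Ici x) x) ∧
    Filter.Tendsto F Filter.atBot (nhds 0) ∧ Filter.Tendsto F Filter.atTop (nhds 1)


section helpers
variable {r : ℕ}

lemma li_coeffs {F : Fin r → ℝ → ℝ} (hF : LinearIndependent ℝ F)
    {c : Fin r → ℝ} (h : ∀ x, ∑ w, c w * F w x = 0) : ∀ w, c w = 0 := by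
  apply Fintype.linearIndependent_iff.1 hF c
  funext x
  simpa [Finset.sum_apply] using h x

lemma li_coeffs_eq {F : Fin r → ℝ → ℝ} (hF : LinearIndependent ℝ F)
    {c d : Fin r → ℝ} (h : ∀ x, ∑ w, c w * F w x = ∑ w, d w * F w x) : ∀ w, c w = d w := by
  intro w
  have := li_coeffs hF (c := fun w => c w - d w) (fun x => by
    simp only [sub_mul, Finset.sum_sub_distrib, h x, sub_self]) w
  linarith

lemma span_u_top {G : Fin r → ℝ → ℝ} (hG : LinearIndependent ℝ G)
    {q : Fin r → ℝ} (hq : ∀ z, q z ≠ 0) :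
    Submodule.span ℝ (Set.range (fun x : ℝ => fun z => q z * G z x)) = ⊤ := by
  by_contra hne
  obtain ⟨φ, hφ0, hφ⟩ := Submodule.exists_dual_map_eq_bot_of_lt_top
    (lt_top_iff_ne_top.2 hne) inferInstance
  have hvan : ∀ x : ℝ, φ (fun z => q z * G z x) = 0 := by
    intro x
    have hmem : (fun z => q z * G z x) ∈ Submodule.span ℝ
        (Set.range (fun x : ℝ => fun z => q z * G z x)) :=
      Submodule.subset_span ⟨x, rfl⟩
    have := hφ ▸ Submodule.mem_map_of_mem (f := φ) hmem
    simpa using this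
  set lam : Fin r → ℝ := fun z => φ (Pi.single z 1) with hlam
  have hrepr : ∀ v : Fin r → ℝ, φ v = ∑ z, v z * lam z := by
    intro v
    conv_lhs => rw [pi_eq_sum_univ v]
    rw [map_sum]
    refine Finset.sum_congr rfl fun z _ => ?_
    rw [map_smul]
    have : (fun j => if z = j then (1:ℝ) else 0) = Pi.single z 1 := by
      funext j; simp [Pi.single_apply, eq_comm]
    rw [this]
    simp [hlam, smul_eq_mul]
  have hz : ∀ z, q z * lam z = 0 := by
    apply li_coeffs hG
    intro x
    have := hvan x
    rw [hrepr] at this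
    simpa [mul_assoc, mul_comm, mul_left_comm] using this
  apply hφ0
  apply LinearMap.ext
  intro v
  rw [hrepr]
  simp only [LinearMap.zero_apply]
  apply Finset.sum_eq_zero
  intro z _
  have hlz : lam z = 0 := by
    rcases mul_eq_zero.1 (hz z) with h | h
    · exact absurd h (hq z)
    · exact h
  simp [hlz]

lemma tendsto_mix (c : Fin r → ℝ) (H : Fin r → ℝ → ℝ)
    (h : ∀ z, Tendsto (H z) atTop (nhds 1)) :
    Tendsto (fun x => ∑ z, c z * H z x) atTop (nhds (∑ z, c z)) := by
  have h' : ∀ z ∈ Finset.univ, Tendsto (fun x => c z * H z x) atTop (nhds (c z)) := by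
    intro z _
    simpa using (h z).const_mul (c z)
  simpa using tendsto_finset_sum Finset.univ h'

end helpers

/-- trivariate mixture uniqueness used in Theorem 1(ii). Two trivariate
finite mixtures of triple products of CDFs, each with linearly independent components and
strictly positive weights summing to one, that agree everywhere must coincide up to a
permutation of the components. -/
theorem trivariate_mixture_uniqueness {r : ℕ}
    (F G : Fin r → ℝ → ℝ)
    (hFcdf : ∀ z, IsCDF (F z)) (hGcdf : ∀ z, IsCDF (G z))
    (hF : LinearIndependent ℝ F) (hG : LinearIndependent ℝ G)
    (p q : Fin r → ℝ)
    (hp : ∀ z, 0 < p z) (hq : ∀ z, 0 < q z)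
    (hps : ∑ z, p z = 1) (hqs : ∑ z, q z = 1)
    (hmix : ∀ x₁ x₂ x₃ : ℝ,
      ∑ z, p z * F z x₁ * F z x₂ * F z x₃ = ∑ z, q z * G z x₁ * G z x₂ * G z x₃) :
    ∃ σ : Equiv.Perm (Fin r), ∀ z, q (σ z) = p z ∧ G (σ z) = F z := by
  have hFtop : ∀ z, Tendsto (F z) atTop (nhds 1) := fun z => (hFcdf z).2.2.2
  have hGtop : ∀ z, Tendsto (G z) atTop (nhds 1) := fun z => (hGcdf z).2.2.2
  -- bivariate identity
  have hmix2 : ∀ x₁ x₂ : ℝ, ∑ z, p z * F z x₁ * F z x₂ = ∑ z, q z * G z x₁ * G z x₂ := by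
    intro x₁ x₂
    have hL := tendsto_mix (fun z => p z * F z x₁ * F z x₂) F hFtop
    have hR := tendsto_mix (fun z => q z * G z x₁ * G z x₂) G hGtop
    have heq : (fun x₃ => ∑ z, (fun z => p z * F z x₁ * F z x₂) z * F z x₃)
        = (fun x₃ => ∑ z, (fun z => q z * G z x₁ * G z x₂) z * G z x₃) :=
      funext fun x₃ => hmix x₁ x₂ x₃
    exact tendsto_nhds_unique hL (heq ▸ hR)
  -- univariate identity
  have hmix1 : ∀ x₁ : ℝ, ∑ z, p z * F z x₁ = ∑ z, q z * G z x₁ := by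
    intro x₁
    have hL := tendsto_mix (fun z => p z * F z x₁) F hFtop
    have hR := tendsto_mix (fun z => q z * G z x₁) G hGtop
    have heq : (fun x₂ => ∑ z, (fun z => p z * F z x₁) z * F z x₂)
        = (fun x₂ => ∑ z, (fun z => q z * G z x₁) z * G z x₂) :=
      funext fun x₂ => hmix2 x₁ x₂
    exact tendsto_nhds_unique hL (heq ▸ hR)
  -- each G z is in the span of the F's
  have hGspan : ∀ z, G z ∈ Submodule.span ℝ (Set.range F) := by
    intro z₀
    set L := Fintype.linearCombination ℝ G with hL
    have hu : ∀ x : ℝ, (fun z => q z * G z x) ∈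
        (Submodule.span ℝ (Set.range F)).comap L := by
      intro x
      simp only [Submodule.mem_comap, hL, Fintype.linearCombination_apply]
      have : (∑ z, (q z * G z x) • G z) = ∑ z, (p z * F z x) • F z := by
        funext x₁
        simp only [Finset.sum_apply, Pi.smul_apply, smul_eq_mul]
        have := hmix2 x₁ x
        calc ∑ z, q z * G z x * G z x₁ = ∑ z, q z * G z x₁ * G z x := by
              refine Finset.sum_congr rfl fun z _ => by ring
          _ = ∑ z, p z * F z x₁ * F z x := (hmix2 x₁ x).symm
          _ = ∑ z, p z * F z x * F z x₁ := by
              refine Finset.sum_congr rfl fun z _ => by ring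
      rw [this]
      exact Submodule.sum_mem _ fun z _ =>
        Submodule.smul_mem _ _ (Submodule.subset_span ⟨z, rfl⟩)
    have htop : (⊤ : Submodule ℝ (Fin r → ℝ)) ≤
        (Submodule.span ℝ (Set.range F)).comap L := by
      rw [← span_u_top hG (fun z => (hq z).ne')]
      rw [Submodule.span_le]
      rintro _ ⟨x, rfl⟩
      exact hu x
    have hsingle := htop (Submodule.mem_top (x := Pi.single z₀ 1))
    simp only [Submodule.mem_comap, hL] at hsingle
    rwa [Fintype.linearCombination_apply_single, one_smul] at hsingle
  have hFspan : ∀ w, F w ∈ Submodule.span ℝ (Set.range G) := by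
    intro w₀
    set L := Fintype.linearCombination ℝ F with hL
    have hu : ∀ x : ℝ, (fun z => p z * F z x) ∈
        (Submodule.span ℝ (Set.range G)).comap L := by
      intro x
      simp only [Submodule.mem_comap, hL, Fintype.linearCombination_apply]
      have : (∑ z, (p z * F z x) • F z) = ∑ z, (q z * G z x) • G z := by
        funext x₁
        simp only [Finset.sum_apply, Pi.smul_apply, smul_eq_mul]
        calc ∑ z, p z * F z x * F z x₁ = ∑ z, p z * F z x₁ * F z x := by
              refine Finset.sum_congr rfl fun z _ => by ring
          _ = ∑ z, q z * G z x₁ * G z x := hmix2 x₁ x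
          _ = ∑ z, q z * G z x * G z x₁ := by
              refine Finset.sum_congr rfl fun z _ => by ring
      rw [this]
      exact Submodule.sum_mem _ fun z _ =>
        Submodule.smul_mem _ _ (Submodule.subset_span ⟨z, rfl⟩)
    have htop : (⊤ : Submodule ℝ (Fin r → ℝ)) ≤
        (Submodule.span ℝ (Set.range G)).comap L := by
      rw [← span_u_top hF (fun z => (hp z).ne')]
      rw [Submodule.span_le]
      rintro _ ⟨x, rfl⟩
      exact hu x
    have hsingle := htop (Submodule.mem_top (x := Pi.single w₀ 1))
    simp only [Submodule.mem_comap, hL] at hsingle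
    rwa [Fintype.linearCombination_apply_single, one_smul] at hsingle
  -- coefficient matrices
  have hAex : ∀ z, ∃ a : Fin r → ℝ, ∀ x, G z x = ∑ w, a w * F w x := by
    intro z
    obtain ⟨a, ha⟩ := (Submodule.mem_span_range_iff_exists_fun ℝ).1 (hGspan z)
    exact ⟨a, fun x => by
      have := congrFun ha x
      simpa [Finset.sum_apply, smul_eq_mul] using this.symm⟩
  have hBex : ∀ w, ∃ b : Fin r → ℝ, ∀ x, F w x = ∑ z, b z * G z x := by
    intro w
    obtain ⟨b, hb⟩ := (Submodule.mem_span_range_iff_exists_fun ℝ).1 (hFspan w)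
    exact ⟨b, fun x => by
      have := congrFun hb x
      simpa [Finset.sum_apply, smul_eq_mul] using this.symm⟩
  choose A hA using hAex
  choose B hB using hBex
  -- B * A = 1
  have hBA : ∀ w w', (∑ z, B w z * A z w') = if w' = w then 1 else 0 := by
    intro w w'
    have h : ∀ x, ∑ u, (if u = w then (1:ℝ) else 0) * F u x
        = ∑ u, (∑ z, B w z * A z u) * F u x := by
      intro x
      simp only [ite_mul, one_mul, zero_mul, Finset.sum_ite_eq', Finset.mem_univ, if_true]
      calc F w x = ∑ z, B w z * G z x := hB w x
        _ = ∑ z, ∑ u, B w z * A z u * F u x := by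
            refine Finset.sum_congr rfl fun z _ => ?_
            rw [hA z x, Finset.mul_sum]
            exact Finset.sum_congr rfl fun u _ => by ring
        _ = ∑ u, (∑ z, B w z * A z u) * F u x := by
            rw [Finset.sum_comm]
            exact Finset.sum_congr rfl fun u _ => by rw [Finset.sum_mul]
    exact (li_coeffs_eq hF h w').symm
  -- A * B = 1
  have hAB : ∀ z z', (∑ w, A z w * B w z') = if z' = z then 1 else 0 := by
    intro z z'
    have h : ∀ x, ∑ u, (if u = z then (1:ℝ) else 0) * G u x
        = ∑ u, (∑ w, A z w * B w u) * G u x := by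
      intro x
      simp only [ite_mul, one_mul, zero_mul, Finset.sum_ite_eq', Finset.mem_univ, if_true]
      calc G z x = ∑ w, A z w * F w x := hA z x
        _ = ∑ w, ∑ u, A z w * B w u * G u x := by
            refine Finset.sum_congr rfl fun w _ => ?_
            rw [hB w x, Finset.mul_sum]
            exact Finset.sum_congr rfl fun u _ => by ring
        _ = ∑ u, (∑ w, A z w * B w u) * G u x := by
            rw [Finset.sum_comm]
            exact Finset.sum_congr rfl fun u _ => by rw [Finset.sum_mul]
    exact (li_coeffs_eq hG h z').symm
  -- first coefficient extraction
  have hE1 : ∀ (x₂ x₃ : ℝ) (w : Fin r),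
      p w * F w x₂ * F w x₃ = ∑ z, q z * A z w * G z x₂ * G z x₃ := by
    intro x₂ x₃ w
    have h : ∀ x₁, ∑ u, (p u * F u x₂ * F u x₃) * F u x₁
        = ∑ u, (∑ z, q z * A z u * G z x₂ * G z x₃) * F u x₁ := by
      intro x₁
      calc ∑ u, (p u * F u x₂ * F u x₃) * F u x₁
          = ∑ u, p u * F u x₁ * F u x₂ * F u x₃ :=
            Finset.sum_congr rfl fun u _ => by ring
        _ = ∑ z, q z * G z x₁ * G z x₂ * G z x₃ := hmix x₁ x₂ x₃
        _ = ∑ z, ∑ u, (q z * A z u * G z x₂ * G z x₃) * F u x₁ := by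
            refine Finset.sum_congr rfl fun z _ => ?_
            rw [hA z x₁]
            simp only [Finset.mul_sum, Finset.sum_mul]
            exact Finset.sum_congr rfl fun u _ => by ring
        _ = ∑ u, (∑ z, q z * A z u * G z x₂ * G z x₃) * F u x₁ := by
            rw [Finset.sum_comm]
            exact Finset.sum_congr rfl fun u _ => by rw [Finset.sum_mul]
    exact li_coeffs_eq hF h w
  -- second coefficient extraction
  have hE2 : ∀ (x₃ : ℝ) (w w₂ : Fin r),
      (if w₂ = w then p w * F w x₃ else 0) = ∑ z, q z * A z w * A z w₂ * G z x₃ := by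
    intro x₃ w w₂
    have h : ∀ x₂, ∑ u, (if u = w then p w * F w x₃ else 0) * F u x₂
        = ∑ u, (∑ z, q z * A z w * A z u * G z x₃) * F u x₂ := by
      intro x₂
      simp only [ite_mul, zero_mul, Finset.sum_ite_eq', Finset.mem_univ, if_true]
      calc p w * F w x₃ * F w x₂ = p w * F w x₂ * F w x₃ := by ring
        _ = ∑ z, q z * A z w * G z x₂ * G z x₃ := hE1 x₂ x₃ w
        _ = ∑ z, ∑ u, (q z * A z w * A z u * G z x₃) * F u x₂ := by
            refine Finset.sum_congr rfl fun z _ => ?_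
            rw [hA z x₂]
            simp only [Finset.mul_sum, Finset.sum_mul]
            exact Finset.sum_congr rfl fun u _ => by ring
        _ = ∑ u, (∑ z, q z * A z w * A z u * G z x₃) * F u x₂ := by
            rw [Finset.sum_comm]
            exact Finset.sum_congr rfl fun u _ => by rw [Finset.sum_mul]
    have := li_coeffs_eq hF h w₂
    simpa using this
  -- third coefficient extraction
  have hE3 : ∀ (w w₂ w₃ : Fin r),
      (if w₃ = w then (if w₂ = w then p w else 0) else 0)
        = ∑ z, q z * A z w * A z w₂ * A z w₃ := by
    intro w w₂ w₃
    have h : ∀ x₃, ∑ u, (if u = w then (if w₂ = w then p w else 0) else 0) * F u x₃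
        = ∑ u, (∑ z, q z * A z w * A z w₂ * A z u) * F u x₃ := by
      intro x₃
      simp only [ite_mul, zero_mul, Finset.sum_ite_eq', Finset.mem_univ, if_true]
      calc (if w₂ = w then p w * F w x₃ else 0)
          = ∑ z, q z * A z w * A z w₂ * G z x₃ := hE2 x₃ w w₂
        _ = ∑ z, ∑ u, (q z * A z w * A z w₂ * A z u) * F u x₃ := by
            refine Finset.sum_congr rfl fun z _ => ?_
            rw [hA z x₃]
            rw [Finset.mul_sum]
            exact Finset.sum_congr rfl fun u _ => by ring
        _ = ∑ u, (∑ z, q z * A z w * A z w₂ * A z u) * F u x₃ := by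
            rw [Finset.sum_comm]
            exact Finset.sum_congr rfl fun u _ => by rw [Finset.sum_mul]
    exact li_coeffs_eq hF h w₃
  -- key identity
  have key : ∀ (w z z' : Fin r),
      (if z' = z then q z * A z w else 0) = p w * B w z * B w z' := by
    intro w z z'
    have hSA : (∑ w₂, ∑ w₃, (B w₂ z * B w₃ z') * (∑ s, q s * A s w * A s w₂ * A s w₃))
        = p w * B w z * B w z' := by
      simp only [← hE3, mul_ite, mul_zero, Finset.sum_ite_eq', Finset.mem_univ, if_true]
      ring
    have hSB : (∑ w₂, ∑ w₃, (B w₂ z * B w₃ z') * (∑ s, q s * A s w * A s w₂ * A s w₃))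
        = if z' = z then q z * A z w else 0 := by
      calc (∑ w₂, ∑ w₃, (B w₂ z * B w₃ z') * (∑ s, q s * A s w * A s w₂ * A s w₃))
          = ∑ w₂, ∑ s, ∑ w₃, (B w₂ z * B w₃ z') * (q s * A s w * A s w₂ * A s w₃) := by
            refine Finset.sum_congr rfl fun w₂ _ => ?_
            rw [← Finset.sum_comm]
            exact Finset.sum_congr rfl fun w₃ _ => by rw [Finset.mul_sum]
        _ = ∑ s, ∑ w₂, ∑ w₃, (B w₂ z * B w₃ z') * (q s * A s w * A s w₂ * A s w₃) := by
            rw [Finset.sum_comm]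
        _ = ∑ s, (q s * A s w) * (∑ w₂, A s w₂ * B w₂ z) * (∑ w₃, A s w₃ * B w₃ z') := by
            refine (Finset.sum_congr rfl fun s _ => ?_).symm
            rw [mul_assoc, Finset.sum_mul_sum, Finset.mul_sum]
            refine Finset.sum_congr rfl fun w₂ _ => ?_
            rw [Finset.mul_sum]
            refine Finset.sum_congr rfl fun w₃ _ => ?_
            ring
        _ = ∑ s, (q s * A s w) * (if z = s then 1 else 0) * (if z' = s then 1 else 0) := by
            refine Finset.sum_congr rfl fun s _ => by rw [hAB s z, hAB s z']
        _ = if z' = z then q z * A z w else 0 := by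
            rw [Finset.sum_eq_single z]
            · by_cases h : z' = z <;> simp [h]
            · intro s _ hs
              have : ¬ (z = s) := fun h => hs h.symm
              simp [this]
            · intro h
              exact absurd (Finset.mem_univ z) h
    rw [← hSB, hSA]
  -- existence and uniqueness of the nonzero entry in each row of B
  have hex : ∀ w, ∃ z, B w z ≠ 0 := by
    intro w
    by_contra hall
    push_neg at hall
    have := hBA w w
    simp only [if_pos rfl] at this
    rw [Finset.sum_eq_zero (fun z _ => by rw [hall z, zero_mul])] at this
    exact zero_ne_one this
  choose σ' hσ' using hex
  have hzero : ∀ w z, z ≠ σ' w → B w z = 0 := by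
    intro w z hz
    have := key w (σ' w) z
    rw [if_neg hz] at this
    have h2 : B w (σ' w) * B w z = 0 := by
      have hpw := (hp w).ne'
      have : p w * (B w (σ' w) * B w z) = 0 := by linarith [this.symm]; 
      exact (mul_eq_zero.1 this).resolve_left hpw
    exact (mul_eq_zero.1 h2).resolve_left (hσ' w)
  -- F w = B w (σ' w) * G (σ' w)
  have hFw : ∀ w x, F w x = B w (σ' w) * G (σ' w) x := by
    intro w x
    rw [hB w x]
    rw [Finset.sum_eq_single (σ' w)]
    · intro z _ hz
      rw [hzero w z hz, zero_mul]
    · intro h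
      exact absurd (Finset.mem_univ _) h
  -- injectivity
  have hinj : Function.Injective σ' := by
    intro w₁ w₂ hw
    by_contra hne
    have h1 := hBA w₁ w₂
    rw [if_neg (fun h => hne h.symm)] at h1
    have h1' : B w₁ (σ' w₁) * A (σ' w₁) w₂ = 0 := by
      rw [← h1, Finset.sum_eq_single (σ' w₁)]
      · intro z _ hz
        rw [hzero w₁ z hz, zero_mul]
      · intro h
        exact absurd (Finset.mem_univ _) h
    have hA0 : A (σ' w₁) w₂ = 0 := (mul_eq_zero.1 h1').resolve_left (hσ' w₁)
    have h2 := hBA w₂ w₂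
    rw [if_pos rfl] at h2
    have h2' : B w₂ (σ' w₂) * A (σ' w₂) w₂ = 1 := by
      rw [← h2, Finset.sum_eq_single (σ' w₂)]
      · intro z _ hz
        rw [hzero w₂ z hz, zero_mul]
      · intro h
        exact absurd (Finset.mem_univ _) h
    rw [← hw, hA0, mul_zero] at h2'
    exact zero_ne_one h2'
  have hbij : Function.Bijective σ' := Finite.injective_iff_bijective.1 hinj
  let σ : Equiv.Perm (Fin r) := Equiv.ofBijective σ' hbij
  have hσ : ∀ w, σ w = σ' w := fun w => rfl
  -- the scalar is 1
  have hone : ∀ w, B w (σ' w) = 1 := by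
    intro w
    have h1 : Tendsto (F w) atTop (nhds 1) := hFtop w
    have h2 : Tendsto (fun x => B w (σ' w) * G (σ' w) x) atTop (nhds (B w (σ' w) * 1)) :=
      (hGtop (σ' w)).const_mul _
    have heq : F w = fun x => B w (σ' w) * G (σ' w) x := funext fun x => hFw w x
    have := tendsto_nhds_unique (heq ▸ h1) h2
    linarith
  have hGF : ∀ w, G (σ w) = F w := by
    intro w
    funext x
    rw [hσ w, hFw w x, hone w, one_mul]
  -- weights
  have hqp : ∀ w, q (σ w) = p w := by
    intro w
    have h : ∀ x, ∑ u, p u * F u x = ∑ u, q (σ u) * F u x := by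
      intro x
      rw [hmix1 x, ← Equiv.sum_comp σ (fun z => q z * G z x)]
      refine Finset.sum_congr rfl fun u _ => ?_
      rw [hGF u]
    exact (li_coeffs_eq hF h w).symm
  exact ⟨σ, fun w => ⟨hqp w, hGF w⟩⟩
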